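/- Suppose T has at least two elements. Then there exist a family of beliefs Π (with each Π(t) a nonempty compact convex subset of Δ(S)) and δ > 0 such that every family of beliefs Π' (with each Π'(t) a nonempty compact convex subset of Δ(S)) satisfying d_H(Π'(t), Π(t)) < δ for all t ∈ T satisfies convex dependence: there exists t ∈ T with closedConvexHull(⋃_{s ≠ t} Π'(s)) ⊆ Π'(t). -/

import Mathlib

set_option maxHeartbeats 1000000
noncomputable section

theorem stmt_18 {S T : Type*} [Fintype S] [Fintype T] [Nonempty S] [Nontrivial T] :
    ∃ P : T → Set (S → ℝ),
      (∀ t, (P t).Nonempty ∧ IsCompact (P t) ∧ Convex ℝ (P t) ∧ P t ⊆ stdSimplex ℝ S) ∧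
      ∃ δ : ℝ, 0 < δ ∧
        ∀ P' : T → Set (S → ℝ),
          (∀ t, (P' t).Nonempty ∧ IsCompact (P' t) ∧ Convex ℝ (P' t) ∧ P' t ⊆ stdSimplex ℝ S) →
          (∀ t, Metric.hausdorffDist (P' t) (P t) < δ) →
          ∃ t : T, closure (convexHull ℝ (⋃ s ∈ {s : T | s ≠ t}, P' s)) ⊆ P' t := by
  classical
  obtain ⟨t₀, t₁, ht01⟩ := exists_pair_ne T
  have hcard : 0 < (Fintype.card S : ℝ) := by
    exact_mod_cast Fintype.card_pos
  set n : ℝ := (Fintype.card S : ℝ) with hn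
  set p : S → ℝ := fun _ => 1 / n with hp
  have hpΔ : p ∈ stdSimplex ℝ S := by
    constructor
    · intro s; positivity
    · simp only [hp, Finset.sum_const, nsmul_eq_mul, Finset.card_univ]
      field_simp
      exact hn.symm
  set ε : ℝ := 1 / (2 * n) with hε
  have hεpos : 0 < ε := by positivity
  set δ : ℝ := ε / 2 with hδ
  have hδpos : 0 < δ := by positivity
  refine ⟨fun t => if t = t₀ then stdSimplex ℝ S else {p}, ?_, δ, hδpos, ?_⟩
  · intro t
    by_cases h : t = t₀
    · simp only [h, if_pos rfl]
      exact ⟨⟨p, hpΔ⟩, isCompact_stdSimplex ℝ S, convex_stdSimplex ℝ S,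
        Set.Subset.refl _⟩
    · simp only [if_neg h]
      exact ⟨Set.singleton_nonempty p, isCompact_singleton, convex_singleton p,
        Set.singleton_subset_iff.2 hpΔ⟩
  intro P' hP' hd
  refine ⟨t₀, ?_⟩
  obtain ⟨hKne, hKcomp, hKconv, hKΔ⟩ := hP' t₀
  -- Hausdorff distance facts
  have hdK : Metric.hausdorffDist (P' t₀) (stdSimplex ℝ S) < δ := by
    have := hd t₀; simpa using this
  have hEK : EMetric.hausdorffEdist (P' t₀) (stdSimplex ℝ S) ≠ ⊤ :=
    Metric.hausdorffEdist_ne_top_of_nonempty_of_bounded hKne ⟨p, hpΔ⟩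
      hKcomp.isBounded (isCompact_stdSimplex ℝ S).isBounded
  -- the union is contained in Δ ∩ closedBall p δ
  have hsub : closure (convexHull ℝ (⋃ s ∈ {s : T | s ≠ t₀}, P' s)) ⊆
      stdSimplex ℝ S ∩ Metric.closedBall p δ := by
    apply closure_minimal
    · apply convexHull_min
      · rintro y hy
        simp only [Set.mem_iUnion] at hy
        obtain ⟨s, hs, hys⟩ := hy
        obtain ⟨hne', hcomp', hconv', hΔ'⟩ := hP' s
        have hst : s ≠ t₀ := hs
        have hds : Metric.hausdorffDist (P' s) {p} < δ := by
          have := hd s; simpa [hst] using this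
        have hE : EMetric.hausdorffEdist (P' s) ({p} : Set (S → ℝ)) ≠ ⊤ :=
          Metric.hausdorffEdist_ne_top_of_nonempty_of_bounded hne'
            (Set.singleton_nonempty p) hcomp'.isBounded Bornology.isBounded_singleton
        refine ⟨hΔ' hys, ?_⟩
        have h1 : Metric.infDist y {p} ≤ Metric.hausdorffDist (P' s) {p} :=
          Metric.infDist_le_hausdorffDist_of_mem hys hE
        rw [Metric.infDist_singleton] at h1
        exact Metric.mem_closedBall.2 (le_of_lt (lt_of_le_of_lt h1 hds))
      · exact ((convex_stdSimplex ℝ S).inter (convex_closedBall p δ))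
    · exact (isCompact_stdSimplex ℝ S).isClosed.inter Metric.isClosed_closedBall
  intro x hx
  obtain ⟨hxΔ, hxB⟩ := hsub hx
  have hxd : dist x p ≤ δ := Metric.mem_closedBall.1 hxB
  by_contra hxK
  -- separate x from K := P' t₀
  obtain ⟨f, u, hfK, hfx⟩ :=
    geometric_hahn_banach_closed_point hKconv hKcomp.isClosed hxK
  obtain ⟨k₀, hk₀⟩ := id hKne
  -- the tangent ball
  set B : Set (S → ℝ) := {w | (∑ s, w s) = 0 ∧ ‖w‖ ≤ 1} with hB
  have hB0 : (0 : S → ℝ) ∈ B := by simp [hB]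
  have hBclosed : IsClosed B := by
    have h1 : IsClosed {w : S → ℝ | (∑ s, w s) = 0} :=
      isClosed_eq (by continuity) continuous_const
    have h2 : IsClosed {w : S → ℝ | ‖w‖ ≤ 1} :=
      isClosed_le continuous_norm continuous_const
    exact h1.inter h2
  have hBcomp : IsCompact B := by
    apply IsCompact.of_isClosed_subset (isCompact_closedBall (0 : S → ℝ) 1) hBclosed
    intro w hw
    simpa [Metric.mem_closedBall, dist_zero_right] using hw.2
  obtain ⟨v, hvB, hvmax⟩ := hBcomp.exists_isMaxOn ⟨0, hB0⟩ f.continuous.continuousOn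
  set m : ℝ := f v with hm
  have hm0 : 0 ≤ m := by
    have := hvmax hB0
    simpa using this
  have hlin : ∀ w : S → ℝ, (∑ s, w s) = 0 → f w ≤ m * ‖w‖ := by
    intro w hw
    rcases eq_or_ne w 0 with rfl | hwne
    · simpa using mul_nonneg hm0 (norm_nonneg (0 : S → ℝ))
    · have hnw : 0 < ‖w‖ := norm_pos_iff.2 hwne
      have hwB : (‖w‖⁻¹ • w) ∈ B := by
        constructor
        · simp only [Pi.smul_apply, smul_eq_mul, ← Finset.mul_sum, hw, mul_zero]
        · rw [norm_smul]
          simp [abs_of_nonneg (inv_nonneg.2 hnw.le)]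
          rw [inv_mul_cancel₀ hnw.ne']
      have := hvmax hwB
      simp only [Set.mem_setOf_eq] at this
      have h2 : f (‖w‖⁻¹ • w) = ‖w‖⁻¹ * f w := by simp
      rw [h2] at this
      calc f w = ‖w‖ * (‖w‖⁻¹ * f w) := by field_simp
      _ ≤ ‖w‖ * m := by
        apply mul_le_mul_of_nonneg_left this hnw.le
      _ = m * ‖w‖ := mul_comm _ _
  have hsumΔ : ∀ y : S → ℝ, y ∈ stdSimplex ℝ S → (∑ s, y s) = 1 := fun y hy => hy.2
  have hsum_sub : ∀ y z : S → ℝ, y ∈ stdSimplex ℝ S → z ∈ stdSimplex ℝ S →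
      (∑ s, (y - z) s) = 0 := by
    intro y z hy hz
    simp [Finset.sum_sub_distrib, hsumΔ y hy, hsumΔ z hz]
  have hmpos : 0 < m := by
    have hk₀Δ : k₀ ∈ stdSimplex ℝ S := hKΔ hk₀
    have hfk₀ : f k₀ < u := hfK k₀ hk₀
    have hxk : f (x - k₀) > 0 := by
      have : f (x - k₀) = f x - f k₀ := by simp
      rw [this]; linarith
    have hle := hlin (x - k₀) (hsum_sub x k₀ hxΔ hk₀Δ)
    by_contra hmn
    push_neg at hmn
    have hm0' : m = 0 := le_antisymm hmn hm0
    rw [hm0'] at hle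
    simp at hle
    linarith
  -- the test point z
  set z : S → ℝ := p + ε • v with hz
  have hvs : ∀ s, |v s| ≤ 1 := by
    intro s
    have h1 : ‖v s‖ ≤ ‖v‖ := norm_le_pi_norm v s
    have h2 : ‖v‖ ≤ 1 := hvB.2
    calc |v s| = ‖v s‖ := rfl
    _ ≤ 1 := le_trans h1 h2
  have hzΔ : z ∈ stdSimplex ℝ S := by
    constructor
    · intro s
      have h1 : z s = 1 / n + ε * v s := by simp [hz, hp]
      have h2 : ε * v s ≥ -(ε * 1) := by
        have := (abs_le.1 (hvs s)).1
        nlinarith [hεpos.le]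
      have h3 : ε * 1 = 1 / (2 * n) := by simp [hε]
      rw [h1]
      have : 1 / n - 1 / (2 * n) ≥ 0 := by
        rw [ge_iff_le, sub_nonneg]
        rw [div_le_div_iff₀ (by positivity) (by positivity)]
        nlinarith
      linarith
    · have : (∑ s, z s) = (∑ s, p s) + ε * (∑ s, v s) := by
        simp [hz, Finset.sum_add_distrib, Finset.mul_sum]
      rw [this, hvB.1, hsumΔ p hpΔ]
      ring
  -- z is close to K
  have hzK : Metric.infDist z (P' t₀) < δ := by
    have h1 : Metric.infDist z (P' t₀) ≤ Metric.hausdorffDist (stdSimplex ℝ S) (P' t₀) :=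
      Metric.infDist_le_hausdorffDist_of_mem hzΔ (by
        rw [EMetric.hausdorffEdist_comm]; exact hEK)
    rw [Metric.hausdorffDist_comm] at h1
    exact lt_of_le_of_lt h1 hdK
  obtain ⟨k, hkK, hkz⟩ := (Metric.infDist_lt_iff hKne).1 hzK
  have hkΔ : k ∈ stdSimplex ℝ S := hKΔ hkK
  -- contradiction chain
  have hfz : f z = f p + ε * m := by simp [hz, hm]
  have hfp : f x - f p ≤ m * δ := by
    have h1 := hlin (x - p) (hsum_sub x p hxΔ hpΔ)
    have h2 : f (x - p) = f x - f p := by simp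
    rw [h2] at h1
    have h3 : ‖x - p‖ = dist x p := (dist_eq_norm x p).symm
    rw [h3] at h1
    calc f x - f p ≤ m * dist x p := h1
    _ ≤ m * δ := mul_le_mul_of_nonneg_left hxd hm0
  have hfk : f k < u := hfK k hkK
  have hzk : f z - f k ≤ m * ‖z - k‖ := by
    have h1 := hlin (z - k) (hsum_sub z k hzΔ hkΔ)
    have h2 : f (z - k) = f z - f k := by simp
    rwa [h2] at h1
  have hnzk : ‖z - k‖ = dist z k := (dist_eq_norm z k).symm
  rw [hnzk] at hzk
  have hlt : m * dist z k < m * δ := mul_lt_mul_of_pos_left hkz hmpos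
  have hεδ : ε = 2 * δ := by rw [hδ]; ring
  nlinarith [hfx, hfk, hfp, hfz, hzk, hlt]
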